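/- Let (Q, ρ, σ, τ) be a string algebra datum with sign maps and let v ∈ Q₀. Then the image sgn(H_l(v)) = {sgn(𝔵) : 𝔵 ∈ H_l(v)} ⊆ {0,1}* is a regular language: there is a deterministic finite automaton M over {0,1} whose accepted language L(M) equals sgn(H_l(v)). -/

import Mathlib

/-- A deterministic finite automaton with a partial transition function. -/
structure PDFA (σ : Type) where
  /-- the (finite) set of states -/
  State : Type
  finState : Finite State
  /-- the start state -/
  start : State
  /-- the set of accept states -/
  accept : Set State
  /-- the partial transition function -/
  step : State → σ → Option State

namespace PDFA

variable {σ : Type} (M : PDFA σ)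

/-- The extended (partial) transition function `δ̂`, reading the word left to right. -/
def run (q : M.State) (w : List σ) : Option M.State :=
  w.foldlM (fun q a => M.step q a) q

/-- The language accepted by the automaton. -/
def lang : Set (List σ) := {w | ∃ q ∈ M.accept, M.run M.start w = some q}

end PDFA

/-- A string algebra datum: a finite quiver together with a finite nonempty set `ρ`
of blocking paths of length at least 2, satisfying the string algebra conditions. -/
structure StringAlgData where
  /-- the vertices -/
  V : Type
  /-- the arrows -/
  A : Type
  finV : Finite V
  finA : Finite A
  src : A → V
  tgt : A → V
  /-- the blocking relations: a finite set of paths, recorded as lists of arrows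
  `[α₁, …, αₙ]` (read right to left, i.e. `s αᵢ = t αᵢ₊₁`) -/
  ρ : Finset (List A)
  ρ_ne : ρ.Nonempty
  ρ_len : ∀ p ∈ ρ, 2 ≤ p.length
  ρ_path : ∀ p ∈ ρ, p.Chain' (fun a b => src a = tgt b)
  /-- at most two arrows out of any vertex -/
  two_out : ∀ (v : V) (a b c : A), src a = v → src b = v → src c = v → a = b ∨ a = c ∨ b = c
  /-- at most two arrows into any vertex -/
  two_in : ∀ (v : V) (a b c : A), tgt a = v → tgt b = v → tgt c = v → a = b ∨ a = c ∨ b = c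
  /-- for every arrow `b`, at most one arrow `a` with `ab ∉ ρ` -/
  unblocked_left : ∀ b a a' : A, src a = tgt b → src a' = tgt b →
    [a, b] ∉ ρ → [a', b] ∉ ρ → a = a'
  /-- for every arrow `b`, at most one arrow `c` with `bc ∉ ρ` -/
  unblocked_right : ∀ b c c' : A, src b = tgt c → src b = tgt c' →
    [b, c] ∉ ρ → [b, c'] ∉ ρ → c = c'

namespace StringAlgData

variable (D : StringAlgData)

/-- Syllables: direct syllables (`Sum.inl`) and inverse syllables (`Sum.inr`). -/
abbrev Syll := D.A ⊕ D.A

/-- The source of a syllable. -/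
def sylSrc : D.Syll → D.V
  | .inl a => D.src a
  | .inr a => D.tgt a

/-- The target of a syllable. -/
def sylTgt : D.Syll → D.V
  | .inl a => D.tgt a
  | .inr a => D.src a

/-- The inverse of a syllable. -/
def sylInv : D.Syll → D.Syll
  | .inl a => .inr a
  | .inr a => .inl a

/-- A walk: a nonempty word `α₁⋯αₙ` over the syllables (stored as the list
`[α₁, …, αₙ]`) with `s(αᵢ) = t(αᵢ₊₁)` for all `i`. -/
def IsWalk (w : List D.Syll) : Prop :=
  w ≠ [] ∧ w.Chain' (fun α β => D.sylSrc α = D.sylTgt β)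

/-- A (nonempty) string: a walk none of whose factors, nor inverse of a factor,
lies in `ρ`, and without a syllable immediately followed by its inverse. -/
def IsString (w : List D.Syll) : Prop :=
  D.IsWalk w ∧
  (∀ p ∈ D.ρ, ¬ (p.map (Sum.inl : D.A → D.Syll)) <:+: w ∧
    ¬ ((p.map (Sum.inr : D.A → D.Syll)).reverse) <:+: w) ∧
  w.Chain' (fun α β => α ≠ D.sylInv β)

/-- The bit associated to a syllable: `0`(=`false`) for direct, `1`(=`true`) for inverse. -/
def sylBit : D.Syll → Bool
  | .inl _ => false
  | .inr _ => true

/-- The sign sequence of a string in `H_l(v)`: `sgn(1) = ε`, `sgn(α𝔶) = sgn(𝔶)·0` for a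
direct syllable `α` and `sgn(α𝔶) = sgn(𝔶)·1` for an inverse syllable `α`. -/
def sgn : List D.Syll → List Bool
  | [] => []
  | α :: y => sgn y ++ [D.sylBit α]

/-- The value of the extended `σ`-map on a syllable, given sign maps `sgm`, `tau` on arrows. -/
def sylSgm (sgm tau : D.A → ℤ) : D.Syll → ℤ
  | .inl a => sgm a
  | .inr a => tau a

/-- Membership in the left hammock `H_l(v)`: the zero-length string `1_{(v,1)}`
(recorded as the empty list) together with all nonempty strings `𝔵` with
`s(𝔵) = v` and `σ(𝔵) = -1`. -/
def InHl (sgm tau : D.A → ℤ) (v : D.V) (w : List D.Syll) : Prop :=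
  w = [] ∨ (D.IsString w ∧ ∃ α, w.getLast? = some α ∧ D.sylSrc α = v ∧ D.sylSgm sgm tau α = -1)

/-- The hammock order `<_l`: for `𝔵 = 𝔵'𝔴`, `𝔶 = 𝔶'𝔴` with `𝔴` the longest common
suffix, `𝔵 <_l 𝔶` iff the rightmost syllable of `𝔵'` is direct or the rightmost
syllable of `𝔶'` is inverse. -/
def ltl (x y : List D.Syll) : Prop :=
  ∃ w x' y', x = x' ++ w ∧ y = y' ++ w ∧
    (∀ α, ¬ (x'.getLast? = some α ∧ y'.getLast? = some α)) ∧
    ((∃ a, x'.getLast? = some (Sum.inl a)) ∨ (∃ a, y'.getLast? = some (Sum.inr a)))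

end StringAlgData

section Aux

open Classical List

variable (D : StringAlgData) (sgm tau : D.A → ℤ) (v : D.V)

/-- Bound on relation lengths (strictly larger than any `p ∈ ρ`). -/
noncomputable def auxN : ℕ := D.ρ.sup List.length + 1

lemma len_le_auxN {p : List D.A} (hp : p ∈ D.ρ) : p.length ≤ auxN D :=
  le_trans (Finset.le_sup (f := List.length) hp) (Nat.le_succ _)

/-- Local admissibility: syllable `β` may be prepended to the (already read,
most-recent-first) word `t`. -/
def Adm (t : List D.Syll) (β : D.Syll) : Prop :=
  (match t.head? with
   | none => D.sylSrc β = v ∧ D.sylSgm sgm tau β = -1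
   | some α => D.sylSrc β = D.sylTgt α ∧ β ≠ D.sylInv α)
  ∧ ∀ p ∈ D.ρ, ¬ (p.map Sum.inl <+: β :: t) ∧ ¬ ((p.map Sum.inr).reverse <+: β :: t)

/-- Incremental validity. -/
def Good : List D.Syll → Prop
  | [] => True
  | β :: t => Adm D sgm tau v t β ∧ Good t

lemma adm_take {t : List D.Syll} {β : D.Syll} :
    Adm D sgm tau v (t.take (auxN D)) β ↔ Adm D sgm tau v t β := by
  have hhead : (t.take (auxN D)).head? = t.head? := by
    cases t with
    | nil => rfl
    | cons a t' => rfl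
  have hpre : ∀ (l : List D.Syll), l.length ≤ auxN D →
      ((l <+: β :: t.take (auxN D)) ↔ (l <+: β :: t)) := by
    intro l hl
    have : β :: t.take (auxN D) = (β :: t).take (auxN D + 1) := by
      simp [List.take_succ_cons]
    rw [this, List.prefix_take_iff]
    constructor
    · exact fun h => h.1
    · exact fun h => ⟨h, le_trans hl (Nat.le_succ _)⟩
  constructor
  · rintro ⟨h1, h2⟩
    refine ⟨by rwa [hhead] at h1, fun p hp => ?_⟩
    have hlen1 : (p.map (Sum.inl : D.A → D.Syll)).length ≤ auxN D := by
      simpa using len_le_auxN D hp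
    have hlen2 : ((p.map (Sum.inr : D.A → D.Syll)).reverse).length ≤ auxN D := by
      simpa using len_le_auxN D hp
    exact ⟨fun h => (h2 p hp).1 ((hpre _ hlen1).2 h),
           fun h => (h2 p hp).2 ((hpre _ hlen2).2 h)⟩
  · rintro ⟨h1, h2⟩
    refine ⟨by rwa [hhead], fun p hp => ?_⟩
    have hlen1 : (p.map (Sum.inl : D.A → D.Syll)).length ≤ auxN D := by
      simpa using len_le_auxN D hp
    have hlen2 : ((p.map (Sum.inr : D.A → D.Syll)).reverse).length ≤ auxN D := by
      simpa using len_le_auxN D hp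
    exact ⟨fun h => (h2 p hp).1 ((hpre _ hlen1).1 h),
           fun h => (h2 p hp).2 ((hpre _ hlen2).1 h)⟩

lemma adm_det
    (hsrc : ∀ a b, a ≠ b → D.src a = D.src b → sgm a = -sgm b)
    (htgt : ∀ a b, a ≠ b → D.tgt a = D.tgt b → tau a = -tau b)
    {t : List D.Syll} {β β' : D.Syll}
    (h : Adm D sgm tau v t β) (h' : Adm D sgm tau v t β')
    (hb : D.sylBit β = D.sylBit β') : β = β' := by
  obtain ⟨h1, h2⟩ := h
  obtain ⟨h1', h2'⟩ := h'
  cases t with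
  | nil =>
    simp only [List.head?_nil] at h1 h1'
    cases β with
    | inl b =>
      cases β' with
      | inl b' =>
        by_cases hbb : b = b'
        · rw [hbb]
        · exfalso
          have := hsrc b b' hbb (h1.1.trans h1'.1.symm)
          have e1 : sgm b = -1 := h1.2
          have e2 : sgm b' = -1 := h1'.2
          omega
      | inr b' => simp [StringAlgData.sylBit] at hb
    | inr b =>
      cases β' with
      | inl b' => simp [StringAlgData.sylBit] at hb
      | inr b' =>
        by_cases hbb : b = b'
        · rw [hbb]
        · exfalso
          have := htgt b b' hbb (h1.1.trans h1'.1.symm)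
          have e1 : tau b = -1 := h1.2
          have e2 : tau b' = -1 := h1'.2
          omega
  | cons α t' =>
    simp only [List.head?_cons] at h1 h1'
    cases α with
    | inl a =>
      cases β with
      | inl b =>
        cases β' with
        | inl b' =>
          -- use unblocked_left; need [b,a] ∉ ρ and [b',a] ∉ ρ
          have hba : [b, a] ∉ D.ρ := by
            intro hmem
            exact (h2 [b, a] hmem).1 ⟨t', rfl⟩
          have hba' : [b', a] ∉ D.ρ := by
            intro hmem
            exact (h2' [b', a] hmem).1 ⟨t', rfl⟩
          have := D.unblocked_left a b b' h1.1 h1'.1 hba hba'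
          rw [this]
        | inr b' => simp [StringAlgData.sylBit] at hb
      | inr b =>
        cases β' with
        | inl b' => simp [StringAlgData.sylBit] at hb
        | inr b' =>
          -- targets equal tgt a, b ≠ a, b' ≠ a, use two_in
          have hb1 : D.tgt b = D.tgt a := h1.1
          have hb1' : D.tgt b' = D.tgt a := h1'.1
          have hne : b ≠ a := by
            intro he; exact h1.2 (by simp [StringAlgData.sylInv, he])
          have hne' : b' ≠ a := by
            intro he; exact h1'.2 (by simp [StringAlgData.sylInv, he])
          rcases D.two_in (D.tgt a) b b' a hb1 hb1' rfl with h | h | h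
          · rw [h]
          · exact absurd h hne
          · exact absurd h hne'
    | inr a =>
      cases β with
      | inl b =>
        cases β' with
        | inl b' =>
          have hb1 : D.src b = D.src a := h1.1
          have hb1' : D.src b' = D.src a := h1'.1
          have hne : b ≠ a := by
            intro he; exact h1.2 (by simp [StringAlgData.sylInv, he])
          have hne' : b' ≠ a := by
            intro he; exact h1'.2 (by simp [StringAlgData.sylInv, he])
          rcases D.two_out (D.src a) b b' a hb1 hb1' rfl with h | h | h
          · rw [h]
          · exact absurd h hne
          · exact absurd h hne'
        | inr b' => simp [StringAlgData.sylBit] at hb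
      | inr b =>
        cases β' with
        | inl b' => simp [StringAlgData.sylBit] at hb
        | inr b' =>
          have hab : [a, b] ∉ D.ρ := by
            intro hmem
            exact (h2 [a, b] hmem).2 ⟨t', by simp⟩
          have hab' : [a, b'] ∉ D.ρ := by
            intro hmem
            exact (h2' [a, b'] hmem).2 ⟨t', by simp⟩
          have := D.unblocked_right a b b' h1.1.symm h1'.1.symm hab hab'
          rw [this]

lemma good_iff_inHl (w : List D.Syll) :
    Good D sgm tau v w ↔ D.InHl sgm tau v w := by
  induction w with
  | nil => simp [Good, StringAlgData.InHl]
  | cons β t ih =>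
    constructor
    · rintro ⟨⟨h1, h2⟩, hgood⟩
      have ht := ih.1 hgood
      right
      cases t with
      | nil =>
        simp only [List.head?_nil] at h1
        refine ⟨⟨⟨by simp, List.isChain_singleton _⟩, fun p hp => ?_, List.isChain_singleton _⟩, β, rfl, h1.1, h1.2⟩
        have hlen : 2 ≤ p.length := D.ρ_len p hp
        constructor
        · intro hinf
          have := hinf.length_le
          simp at this
          omega
        · intro hinf
          have := hinf.length_le
          simp at this
          omega
      | cons α t' =>
        rcases ht with h0 | ⟨⟨⟨_, hch⟩, hforb, hinv⟩, γ, hlast, hγv, hγs⟩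
        · exact absurd h0 (by simp)
        simp only [List.head?_cons] at h1
        refine ⟨⟨⟨by simp, List.isChain_cons_cons.2 ⟨h1.1, hch⟩⟩, fun p hp => ?_,
          List.isChain_cons_cons.2 ⟨h1.2, hinv⟩⟩, γ, by rw [List.getLast?_cons_cons]; exact hlast,
          hγv, hγs⟩
        constructor
        · intro hinf
          rcases List.infix_cons_iff.1 hinf with hpre | hinf'
          · exact (h2 p hp).1 hpre
          · exact (hforb p hp).1 hinf'
        · intro hinf
          rcases List.infix_cons_iff.1 hinf with hpre | hinf'
          · exact (h2 p hp).2 hpre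
          · exact (hforb p hp).2 hinf'
    · rintro (h0 | ⟨⟨⟨_, hch⟩, hforb, hinv⟩, γ, hlast, hγv, hγs⟩)
      · exact absurd h0 (by simp)
      refine ⟨⟨?_, fun p hp => ⟨fun hpre => (hforb p hp).1 hpre.isInfix,
        fun hpre => (hforb p hp).2 hpre.isInfix⟩⟩, ?_⟩
      · cases t with
        | nil =>
          simp only [List.head?_nil]
          obtain rfl : β = γ := by simpa using hlast
          exact ⟨hγv, hγs⟩
        | cons α t' =>
          simp only [List.head?_cons]
          exact ⟨(List.isChain_cons_cons.1 hch).1, (List.isChain_cons_cons.1 hinv).1⟩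
      · apply ih.2
        cases t with
        | nil => exact Or.inl rfl
        | cons α t' =>
          right
          refine ⟨⟨⟨by simp, (List.isChain_cons_cons.1 hch).2⟩, fun p hp =>
            ⟨fun h' => (hforb p hp).1 (List.infix_cons h'),
             fun h' => (hforb p hp).2 (List.infix_cons h')⟩,
            (List.isChain_cons_cons.1 hinv).2⟩, γ, ?_, hγv, hγs⟩
          rw [List.getLast?_cons_cons] at hlast
          exact hlast

/-- The automaton. -/
noncomputable def auxM : PDFA Bool where
  State := {s : List D.Syll // s.length ≤ auxN D}
  finState := by
    have := D.finA
    exact (List.finite_length_le D.Syll (auxN D)).to_subtype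
  start := ⟨[], by simp⟩
  accept := Set.univ
  step := fun q b =>
    if h : ∃ β, Adm D sgm tau v q.1 β ∧ D.sylBit β = b then
      some ⟨(h.choose :: q.1).take (auxN D), by simp [List.length_take]⟩
    else none

lemma take_cons_take {β : D.Syll} {t : List D.Syll} :
    (β :: t.take (auxN D)).take (auxN D) = (β :: t).take (auxN D) := by
  obtain ⟨n, hn⟩ : ∃ n, auxN D = n + 1 := ⟨D.ρ.sup List.length, rfl⟩
  rw [hn]
  simp only [List.take_succ_cons, List.take_take]
  rw [Nat.min_eq_left (Nat.le_succ n)]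

lemma run_append_single (M : PDFA Bool) (q : M.State) (x : List Bool) (b : Bool) :
    M.run q (x ++ [b]) = (M.run q x).bind (fun q' => M.step q' b) := by
  simp [PDFA.run, List.foldlM_append]

lemma step_eq (q : (auxM D sgm tau v).State) (b : Bool)
    (hex : ∃ β, Adm D sgm tau v q.1 β ∧ D.sylBit β = b) :
    (auxM D sgm tau v).step q b =
      some ⟨(hex.choose :: q.1).take (auxN D), by simp [List.length_take]⟩ := by
  show (if h : ∃ β, Adm D sgm tau v q.1 β ∧ D.sylBit β = b then
      some (⟨(h.choose :: q.1).take (auxN D), by simp [List.length_take]⟩ :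
        (auxM D sgm tau v).State) else none) = _
  rw [dif_pos hex]
  rfl

lemma step_some {q q' : (auxM D sgm tau v).State} {b : Bool}
    (h : (auxM D sgm tau v).step q b = some q') :
    ∃ β, Adm D sgm tau v q.1 β ∧ D.sylBit β = b ∧ q'.1 = (β :: q.1).take (auxN D) := by
  by_cases hex : ∃ β, Adm D sgm tau v q.1 β ∧ D.sylBit β = b
  · refine ⟨hex.choose, hex.choose_spec.1, hex.choose_spec.2, ?_⟩
    rw [step_eq D sgm tau v q b hex] at h
    rw [← Option.some.inj h]
  · exfalso
    have : (auxM D sgm tau v).step q b = none := by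
      show (if h : ∃ β, Adm D sgm tau v q.1 β ∧ D.sylBit β = b then
        some (⟨(h.choose :: q.1).take (auxN D), by simp [List.length_take]⟩ :
          (auxM D sgm tau v).State) else none) = none
      rw [dif_neg hex]
    rw [this] at h
    cases h

lemma run_good
    (hsrc : ∀ a b, a ≠ b → D.src a = D.src b → sgm a = -sgm b)
    (htgt : ∀ a b, a ≠ b → D.tgt a = D.tgt b → tau a = -tau b)
    (u : List D.Syll) (hu : Good D sgm tau v u) :
    (auxM D sgm tau v).run (auxM D sgm tau v).start (u.map D.sylBit).reverse =
      some ⟨u.take (auxN D), by simp [List.length_take]⟩ := by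
  induction u with
  | nil => rfl
  | cons β t ih =>
    obtain ⟨hadm, hgood⟩ := hu
    have hx : ((β :: t).map D.sylBit).reverse = (t.map D.sylBit).reverse ++ [D.sylBit β] := by
      simp
    rw [hx, run_append_single, ih hgood]
    show (auxM D sgm tau v).step ⟨t.take (auxN D), by simp [List.length_take]⟩ (D.sylBit β) = _
    set s : (auxM D sgm tau v).State :=
      ⟨t.take (auxN D), by simp [List.length_take]⟩ with hs
    have hex : ∃ β', Adm D sgm tau v s.1 β' ∧ D.sylBit β' = D.sylBit β :=
      ⟨β, (adm_take D sgm tau v).2 hadm, rfl⟩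
    rw [step_eq D sgm tau v s (D.sylBit β) hex]
    have hce : hex.choose = β :=
      adm_det D sgm tau v hsrc htgt hex.choose_spec.1
        ((adm_take D sgm tau v).2 hadm) hex.choose_spec.2
    congr 1
    apply Subtype.ext
    show (hex.choose :: t.take (auxN D)).take (auxN D) = (β :: t).take (auxN D)
    rw [hce]
    exact take_cons_take D

lemma good_of_run (x : List Bool) (q : (auxM D sgm tau v).State)
    (h : (auxM D sgm tau v).run (auxM D sgm tau v).start x = some q) :
    ∃ u, Good D sgm tau v u ∧ x = (u.map D.sylBit).reverse ∧
      q.1 = u.take (auxN D) := by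
  induction x using List.reverseRecOn generalizing q with
  | nil =>
    obtain rfl : (⟨[], by simp⟩ : (auxM D sgm tau v).State) = q := Option.some.inj h
    exact ⟨[], trivial, by simp, by simp⟩
  | append_singleton y b ih =>
    rw [run_append_single] at h
    obtain ⟨q', hq', hstep⟩ := Option.bind_eq_some_iff.1 h
    obtain ⟨u', hgood', hy, hq'1⟩ := ih q' hq'
    obtain ⟨β, hadm, hbit, hq1⟩ := step_some D sgm tau v hstep
    rw [hq'1] at hadm hq1
    refine ⟨β :: u', ⟨(adm_take D sgm tau v).1 hadm, hgood'⟩, ?_, ?_⟩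
    · rw [hy, ← hbit]
      simp
    · rw [hq1]
      exact take_cons_take D

lemma sgn_eq_reverse_map (w : List D.Syll) :
    D.sgn w = (w.map D.sylBit).reverse := by
  induction w with
  | nil => rfl
  | cons α y ih => simp [StringAlgData.sgn, ih]

end Aux

/-- For a string algebra datum with sign maps and a vertex `v`, the
image `sgn(H_l(v)) ⊆ {0,1}*` is a regular language: there is a DFA `M` over `{0,1}`
with `L(M) = sgn(H_l(v))`. -/
theorem sgn_hammock_regular (D : StringAlgData) (sgm tau : D.A → ℤ)
    (hsgm : ∀ a, sgm a = 1 ∨ sgm a = -1) (htau : ∀ a, tau a = 1 ∨ tau a = -1)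
    (hsrc : ∀ a b, a ≠ b → D.src a = D.src b → sgm a = -sgm b)
    (htgt : ∀ a b, a ≠ b → D.tgt a = D.tgt b → tau a = -tau b)
    (hcomp : ∀ a b, D.src a = D.tgt b → [a, b] ∉ D.ρ → sgm a = -tau b)
    (v : D.V) :
    ∃ M : PDFA Bool, M.lang = D.sgn '' {w : List D.Syll | D.InHl sgm tau v w} := by
  refine ⟨auxM D sgm tau v, ?_⟩
  ext x
  constructor
  · rintro ⟨q, -, hrun⟩
    obtain ⟨u, hgood, hx, -⟩ := good_of_run D sgm tau v x q hrun
    refine ⟨u, (good_iff_inHl D sgm tau v u).1 hgood, ?_⟩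
    rw [sgn_eq_reverse_map, hx]
  · rintro ⟨w, hw, hx⟩
    have hgood := (good_iff_inHl D sgm tau v w).2 hw
    refine ⟨⟨w.take (auxN D), by simp [List.length_take]⟩, trivial, ?_⟩
    rw [← hx, sgn_eq_reverse_map]
    exact run_good D sgm tau v hsrc htgt w hgood
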